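/- Fix a test labeling y ∈ X, let p ∈ P^{2,y} be defined by sets Y_v ⊆ X_v \ {y_v}, and let ḡ be the reduced cost vector for p. Let Λ be the local polytope and let φ be a dual vector satisfying min_{i∈X_u} ḡ^φ_u(i) = 0 for every u ∈ V and, for every uv ∈ E, every i ∈ X_u and every j ∈ X_v, min_{i'∈X_u} ḡ^φ_{uv}(i',j) = 0 and min_{j'∈X_v} ḡ^φ_{uv}(i,j') = 0. Then at least one of the following holds: (a) ḡ^φ_∅ = 0, φ is dual optimal for min_{μ∈Λ} ⟨ḡ, μ⟩, and δ(y) is a primal optimal solution (min_{μ∈Λ} ⟨ḡ, μ⟩ = ⟨ḡ, δ(y)⟩ = 0); (b) there exists u ∈ V with O_u(φ) ∩ Y_u ≠ ∅, where O_u(φ) = {i ∈ X_u : ḡ^φ_u(i) = 0}. -/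

import Mathlib

open Finset

noncomputable section

variable {V : Type*} [Fintype V] [DecidableEq V]
variable {X : V → Type*} [∀ v, Fintype (X v)] [∀ v, DecidableEq (X v)]
variable {E : Finset (V × V)}

/-- The index set `I`: the constant component `∅`, unary components `(u, i)` and
pairwise components `(uv, ij)` for edges `uv ∈ E`. -/
abbrev GIdx (X : V → Type*) (E : Finset (V × V)) : Type _ :=
  Unit ⊕ (Σ v : V, X v) ⊕ (Σ e : {e : V × V // e ∈ E}, X e.1.1 × X e.1.2)

/-- Vectors in `ℝ^I` (cost vectors and relaxed labelings live in the same space). -/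
abbrev GVec (X : V → Type*) (E : Finset (V × V)) : Type _ := GIdx X E → ℝ

/-- Index of the constant component. -/
def cIdx : GIdx X E := Sum.inl ()

/-- Index of the unary component `(v, i)`. -/
def uIdx (v : V) (i : X v) : GIdx X E := Sum.inr (Sum.inl ⟨v, i⟩)

/-- Index of the pairwise component `(uv, ij)` of the edge `e = uv ∈ E`. -/
def pIdx (e : {e : V × V // e ∈ E}) (i : X e.1.1) (j : X e.1.2) : GIdx X E :=
  Sum.inr (Sum.inr ⟨e, (i, j)⟩)

/-- The energy `E_f(x) = f_∅ + Σ_v f_v(x_v) + Σ_{uv∈E} f_{uv}(x_u,x_v)`. -/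
def energy (f : GVec X E) (x : ∀ v, X v) : ℝ :=
  f cIdx + ∑ v : V, f (uIdx v (x v)) +
    ∑ e : {e : V × V // e ∈ E}, f (pIdx e (x e.1.1) (x e.1.2))

/-- The standard inner product on `ℝ^I`. -/
def dotp (f μ : GVec X E) : ℝ := ∑ idx : GIdx X E, f idx * μ idx

/-- The lifting (overcomplete representation) `δ : X → ℝ^I`. -/
def lift (x : ∀ v, X v) : GVec X E := fun idx =>
  match idx with
  | Sum.inl _ => 1
  | Sum.inr (Sum.inl ⟨v, i⟩) => if x v = i then 1 else 0
  | Sum.inr (Sum.inr ⟨e, (i, j)⟩) => if x e.1.1 = i ∧ x e.1.2 = j then 1 else 0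

/-- Application of a node-wise substitution to a labeling: `p(x)_v = p_v(x_v)`. -/
def applySub (p : ∀ v, X v → X v) (x : ∀ v, X v) : ∀ v, X v := fun v => p v (x v)

/-- All the component maps `p_v` are idempotent. -/
def NodewiseIdem (p : ∀ v, X v → X v) : Prop := ∀ (v : V) (i : X v), p v (p v i) = p v i

/-- `p` is strictly improving for the cost vector `f`:
`E_f(p(x)) < E_f(x)` whenever `p(x) ≠ x`. -/
def StrictlyImproving (f : GVec X E) (p : ∀ v, X v → X v) : Prop :=
  ∀ x : ∀ v, X v, applySub p x ≠ x → energy f (applySub p x) < energy f x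

/-- The adjoint `[p]ᵀ` of the linear extension of a node-wise substitution `p`,
acting on cost vectors: `([p]ᵀ f)_∅ = f_∅`, `([p]ᵀ f)_u(i) = f_u(p_u(i))`,
`([p]ᵀ f)_{uv}(i,j) = f_{uv}(p_u(i), p_v(j))`. -/
def Padj (p : ∀ v, X v → X v) (f : GVec X E) : GVec X E := fun idx =>
  match idx with
  | Sum.inl _ => f cIdx
  | Sum.inr (Sum.inl ⟨v, i⟩) => f (uIdx v (p v i))
  | Sum.inr (Sum.inr ⟨e, (i, j)⟩) => f (pIdx e (p e.1.1 i) (p e.1.2 j))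

/-- The linear extension `[p] : ℝ^I → ℝ^I` of a node-wise substitution `p`
(the adjoint of `Padj p` with respect to `dotp`): it satisfies `δ(p(x)) = [p] δ(x)`. -/
def Pmap (p : ∀ v, X v → X v) (μ : GVec X E) : GVec X E := fun idx =>
  match idx with
  | Sum.inl _ => μ cIdx
  | Sum.inr (Sum.inl ⟨v, i⟩) => ∑ i' : X v, if p v i' = i then μ (uIdx v i') else 0
  | Sum.inr (Sum.inr ⟨e, (i, j)⟩) =>
      ∑ i' : X e.1.1, ∑ j' : X e.1.2,
        if p e.1.1 i' = i ∧ p e.1.2 j' = j then μ (pIdx e i' j') else 0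

/-- `p` is strictly `Λ`-improving for `f` (`p ∈ S_f`):
`min_{μ∈Λ} ⟨f − [p]ᵀf, μ⟩ = 0` and every minimizer `μ` satisfies `[p]μ = μ`. -/
def StrictlyLambdaImproving (Λ : Set (GVec X E)) (f : GVec X E)
    (p : ∀ v, X v → X v) : Prop :=
  IsLeast {r : ℝ | ∃ μ ∈ Λ, dotp (f - Padj p f) μ = r} 0 ∧
    ∀ μ ∈ Λ, dotp (f - Padj p f) μ = 0 → Pmap p μ = μ

/-- The subset-to-one substitution determined by a test labeling `y` and
sets `Y_v` of labels replaced by `y_v`. -/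
def subToOne (y : ∀ v, X v) (Y : ∀ v, Finset (X v)) : ∀ v, X v → X v :=
  fun v i => if i ∈ Y v then y v else i

/-- Membership in the class `P^{2,y}` of subset-to-one substitutions. -/
def InPtwo (y : ∀ v, X v) (p : ∀ v, X v → X v) : Prop :=
  ∃ Y : ∀ v, Finset (X v), (∀ v, y v ∉ Y v) ∧
    ∀ (v : V) (i : X v), p v i = if i ∈ Y v then y v else i

/-- The local polytope `Λ`. -/
def localPolytope (X : V → Type*) [∀ v, Fintype (X v)] (E : Finset (V × V)) :
    Set (GVec X E) :=
  { μ | (∀ idx, 0 ≤ μ idx) ∧ μ cIdx = 1 ∧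
      (∀ u : V, ∑ i : X u, μ (uIdx u i) = μ cIdx) ∧
      (∀ (e : {e : V × V // e ∈ E}) (i : X e.1.1),
        ∑ j : X e.1.2, μ (pIdx e i j) = μ (uIdx e.1.1 i)) ∧
      (∀ (e : {e : V × V // e ∈ E}) (j : X e.1.2),
        ∑ i : X e.1.1, μ (pIdx e i j) = μ (uIdx e.1.2 j)) }

/-- A dual vector `φ`: for each edge `uv ∈ E` messages `φ_{uv} : X_u → ℝ` (to the tail)
and `φ_{vu} : X_v → ℝ` (to the head), and a number `φ_u` for every node. -/
structure GDual (X : V → Type*) (E : Finset (V × V)) where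
  fwd : ∀ e : {e : V × V // e ∈ E}, X e.1.1 → ℝ
  bwd : ∀ e : {e : V × V // e ∈ E}, X e.1.2 → ℝ
  nd : V → ℝ

/-- Reparametrized unary cost `g^φ_u(i) = g_u(i) + Σ_{v∈nb(u)} φ_{uv}(i) − φ_u`. -/
def repUn (g : GVec X E) (φ : GDual X E) (u : V) (i : X u) : ℝ :=
  g (uIdx u i) +
    (∑ e : {e : V × V // e ∈ E},
      ((if h : e.1.1 = u then φ.fwd e (cast (congrArg X h.symm) i) else 0) +
        (if h : e.1.2 = u then φ.bwd e (cast (congrArg X h.symm) i) else 0))) -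
    φ.nd u

/-- Reparametrized pairwise cost `g^φ_{uv}(i,j) = g_{uv}(i,j) − φ_{uv}(i) − φ_{vu}(j)`. -/
def repPw (g : GVec X E) (φ : GDual X E) (e : {e : V × V // e ∈ E})
    (i : X e.1.1) (j : X e.1.2) : ℝ :=
  g (pIdx e i j) - φ.fwd e i - φ.bwd e j

/-- Reparametrized constant `g^φ_∅ = g_∅ + Σ_u φ_u` (the dual lower bound). -/
def repC (g : GVec X E) (φ : GDual X E) : ℝ := g cIdx + ∑ u : V, φ.nd u

/-- Dual feasibility: `g^φ ≥ 0` componentwise. -/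
def DualFeasible (g : GVec X E) (φ : GDual X E) : Prop :=
  (∀ (u : V) (i : X u), 0 ≤ repUn g φ u i) ∧
    ∀ (e : {e : V × V // e ∈ E}) (i : X e.1.1) (j : X e.1.2), 0 ≤ repPw g φ e i j

/-- Arc consistency of the reparametrized cost `g^φ`. -/
def ArcConsistent (g : GVec X E) (φ : GDual X E) : Prop :=
  (∀ (e : {e : V × V // e ∈ E}) (i : X e.1.1) (j : X e.1.2),
      repPw g φ e i j = 0 → repUn g φ e.1.1 i = 0 ∧ repUn g φ e.1.2 j = 0) ∧
  (∀ (e : {e : V × V // e ∈ E}) (i : X e.1.1),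
      repUn g φ e.1.1 i = 0 → ∃ j : X e.1.2, repPw g φ e i j = 0) ∧
  (∀ (e : {e : V × V // e ∈ E}) (j : X e.1.2),
      repUn g φ e.1.2 j = 0 → ∃ i : X e.1.1, repPw g φ e i j = 0)

/-- The reduced cost vector `ḡ` associated with the subset-to-one substitution `p ∈ P^{2,y}`
given by the sets `Y_v` (where `g = f − [p]ᵀ f`). -/
def reduced (f : GVec X E) (y : ∀ v, X v) (Y : ∀ v, Finset (X v)) : GVec X E :=
  fun idx =>
    match idx with
    | Sum.inl _ => 0
    | Sum.inr (Sum.inl ⟨v, i⟩) => (f - Padj (subToOne y Y) f) (uIdx v i)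
    | Sum.inr (Sum.inr ⟨e, (i, j)⟩) =>
        let g : GVec X E := f - Padj (subToOne y Y) f
        let dvu : ℝ := sInf ((fun i' => g (pIdx e i' j)) '' {i' : X e.1.1 | i' ∉ Y e.1.1})
        let duv : ℝ := sInf ((fun j' => g (pIdx e i j')) '' {j' : X e.1.2 | j' ∉ Y e.1.2})
        if i ∈ Y e.1.1 then
          if j ∈ Y e.1.2 then min (dvu + duv) (g (pIdx e i j)) else duv
        else if j ∈ Y e.1.2 then dvu else 0

/-- Auxiliary: a purely combinatorial key lemma about a single edge. -/
lemma edge_key {α β : Type*} [Fintype α] [Fintype β] (Yu : Finset α) (Yv : Finset β)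
    (G : α → β → ℝ) (F : α → ℝ) (Bb : β → ℝ) (d : α → ℝ) (ee : β → ℝ)
    (hAB : ∀ i j, i ∉ Yu → j ∉ Yv → G i j = 0)
    (hYB : ∀ i j, i ∈ Yu → j ∉ Yv → G i j = d i)
    (hAY : ∀ i j, i ∉ Yu → j ∈ Yv → G i j = ee j)
    (hYY : ∀ i j, i ∈ Yu → j ∈ Yv → G i j ≤ d i + ee j)
    (hpos : ∀ i j, 0 ≤ G i j - F i - Bb j)
    (hrow : ∀ j, ∃ i, G i j - F i - Bb j = 0)
    (hcol : ∀ i, ∃ j, G i j - F i - Bb j = 0)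
    (iS : α) (jS : β) (hi : iS ∉ Yu) (hj : jS ∉ Yv) :
    0 ≤ F iS + Bb jS := by
  obtain ⟨i₀, hi₀⟩ := hrow jS
  by_cases hi₀Y : i₀ ∈ Yu
  · obtain ⟨j₀, hj₀⟩ := hcol iS
    by_cases hj₀Y : j₀ ∈ Yv
    · -- the hard case
      have h1 : G i₀ jS = d i₀ := hYB _ _ hi₀Y hj
      have h2 : G iS j₀ = ee j₀ := hAY _ _ hi hj₀Y
      have h3 : G i₀ j₀ ≤ d i₀ + ee j₀ := hYY _ _ hi₀Y hj₀Y
      have h4 := hpos i₀ j₀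
      rw [h1] at hi₀
      rw [h2] at hj₀
      linarith
    ·
      have h2 : G iS j₀ = 0 := hAB _ _ hi hj₀Y
      have h1 : G i₀ jS = d i₀ := hYB _ _ hi₀Y hj
      have h3 : G i₀ j₀ = d i₀ := hYB _ _ hi₀Y hj₀Y
      have h4 := hpos i₀ j₀
      rw [h2] at hj₀
      rw [h1] at hi₀
      -- hj₀ : -F iS - Bb j₀ = 0, hi₀ : d i₀ - F i₀ - Bb jS = 0, h4 : 0 ≤ d i₀ - F i₀ - Bb j₀
      have h5 := hpos iS jS
      rw [hAB _ _ hi hj] at h5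
      -- also need Bb jS ≥ Bb j₀? from hi₀ and h4 : Bb jS ≤ Bb j₀. That's wrong direction.
      -- Use instead: hpos iS j₀ gives nothing new. Use row at j₀? We have what we need:
      -- F iS = -Bb j₀; want 0 ≤ F iS + Bb jS = Bb jS - Bb j₀. From hi₀: Bb jS = d i₀ - F i₀,
      -- from h4 : Bb j₀ ≤ d i₀ - F i₀ = Bb jS.
      linarith
  · have h1 : G i₀ jS = 0 := hAB _ _ hi₀Y hj
    rw [h1] at hi₀
    -- Bb jS = -F i₀ ; want 0 ≤ F iS + Bb jS = F iS - F i₀, i.e. F i₀ ≤ F iS.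
    obtain ⟨j₀, hj₀⟩ := hcol iS
    have h2 := hpos i₀ j₀
    by_cases hj₀Y : j₀ ∈ Yv
    · rw [hAY _ _ hi hj₀Y] at hj₀
      rw [hAY _ _ hi₀Y hj₀Y] at h2
      linarith
    · rw [hAB _ _ hi hj₀Y] at hj₀
      rw [hAB _ _ hi₀Y hj₀Y] at h2
      linarith

lemma sum_dite_cast_fun (w : V) (F : X w → ℝ) (x : ∀ v, X v) :
    ∑ u : V, (if h : w = u then F (cast (congrArg X h.symm) (x u)) else 0) = F (x w) := by
  rw [Finset.sum_eq_single w]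
  · simp
  · intro u _ hne
    rw [dif_neg (fun h => hne h.symm)]
  · intro h; exact absurd (Finset.mem_univ w) h

lemma sum_sum_dite_cast (w : V) (F : X w → ℝ) (G : ∀ u, X u → ℝ) :
    ∑ u : V, ∑ i : X u,
      (if h : w = u then F (cast (congrArg X h.symm) i) else 0) * G u i
      = ∑ i : X w, F i * G w i := by
  rw [Finset.sum_eq_single w]
  · simp
  · intro u _ hne
    apply Finset.sum_eq_zero
    intro i _
    rw [dif_neg (fun h => hne h.symm), zero_mul]
  · intro h; exact absurd (Finset.mem_univ w) h

lemma dotp_expand (f μ : GVec X E) :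
    dotp f μ = f cIdx * μ cIdx
      + ∑ u : V, ∑ i : X u, f (uIdx u i) * μ (uIdx u i)
      + ∑ e : {e : V × V // e ∈ E}, ∑ i : X e.1.1, ∑ j : X e.1.2,
          f (pIdx e i j) * μ (pIdx e i j) := by
  rw [dotp, Fintype.sum_sum_type, Fintype.sum_sum_type, ← add_assoc]
  congr 1
  congr 1
  · simp [cIdx]
  · rw [← Finset.univ_sigma_univ, Finset.sum_sigma]
    rfl
  · rw [← Finset.univ_sigma_univ, Finset.sum_sigma]
    apply Finset.sum_congr rfl
    intro e _
    rw [Fintype.sum_prod_type]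
    rfl

lemma msg_sum (φ : GDual X E) (G : ∀ u, X u → ℝ) :
    (∑ u : V, ∑ i : X u,
      (∑ e : {e : V × V // e ∈ E},
        ((if h : e.1.1 = u then φ.fwd e (cast (congrArg X h.symm) i) else 0) +
          (if h : e.1.2 = u then φ.bwd e (cast (congrArg X h.symm) i) else 0))) * G u i)
    = (∑ e : {e : V × V // e ∈ E}, ∑ i : X e.1.1, φ.fwd e i * G e.1.1 i)
      + (∑ e : {e : V × V // e ∈ E}, ∑ j : X e.1.2, φ.bwd e j * G e.1.2 j) := by
  have h1 : ∀ u : V, ∑ i : X u,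
      (∑ e : {e : V × V // e ∈ E},
        ((if h : e.1.1 = u then φ.fwd e (cast (congrArg X h.symm) i) else 0) +
          (if h : e.1.2 = u then φ.bwd e (cast (congrArg X h.symm) i) else 0))) * G u i
      = ∑ e : {e : V × V // e ∈ E}, ∑ i : X u,
        ((if h : e.1.1 = u then φ.fwd e (cast (congrArg X h.symm) i) else 0) * G u i +
          (if h : e.1.2 = u then φ.bwd e (cast (congrArg X h.symm) i) else 0) * G u i) := by
    intro u
    have : ∀ i : X u,
        (∑ e : {e : V × V // e ∈ E},
          ((if h : e.1.1 = u then φ.fwd e (cast (congrArg X h.symm) i) else 0) +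
            (if h : e.1.2 = u then φ.bwd e (cast (congrArg X h.symm) i) else 0))) * G u i
        = ∑ e : {e : V × V // e ∈ E},
          ((if h : e.1.1 = u then φ.fwd e (cast (congrArg X h.symm) i) else 0) * G u i +
            (if h : e.1.2 = u then φ.bwd e (cast (congrArg X h.symm) i) else 0) * G u i) := by
      intro i
      rw [Finset.sum_mul]
      exact Finset.sum_congr rfl (fun e _ => add_mul _ _ _)
    rw [Finset.sum_congr rfl (fun i _ => this i)]
    exact Finset.sum_comm
  calc
    (∑ u : V, ∑ i : X u,
      (∑ e : {e : V × V // e ∈ E},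
        ((if h : e.1.1 = u then φ.fwd e (cast (congrArg X h.symm) i) else 0) +
          (if h : e.1.2 = u then φ.bwd e (cast (congrArg X h.symm) i) else 0))) * G u i)
      = ∑ u : V, ∑ e : {e : V × V // e ∈ E}, ∑ i : X u,
        ((if h : e.1.1 = u then φ.fwd e (cast (congrArg X h.symm) i) else 0) * G u i +
          (if h : e.1.2 = u then φ.bwd e (cast (congrArg X h.symm) i) else 0) * G u i) :=
      Finset.sum_congr rfl (fun u _ => h1 u)
    _ = ∑ e : {e : V × V // e ∈ E}, ∑ u : V, ∑ i : X u,
        ((if h : e.1.1 = u then φ.fwd e (cast (congrArg X h.symm) i) else 0) * G u i +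
          (if h : e.1.2 = u then φ.bwd e (cast (congrArg X h.symm) i) else 0) * G u i) :=
      Finset.sum_comm
    _ = ∑ e : {e : V × V // e ∈ E},
        ((∑ u : V, ∑ i : X u,
            (if h : e.1.1 = u then φ.fwd e (cast (congrArg X h.symm) i) else 0) * G u i)
          + (∑ u : V, ∑ i : X u,
            (if h : e.1.2 = u then φ.bwd e (cast (congrArg X h.symm) i) else 0) * G u i)) := by
      refine Finset.sum_congr rfl (fun e _ => ?_)
      rw [← Finset.sum_add_distrib]
      exact Finset.sum_congr rfl (fun u _ => Finset.sum_add_distrib)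
    _ = (∑ e : {e : V × V // e ∈ E}, ∑ i : X e.1.1, φ.fwd e i * G e.1.1 i)
      + (∑ e : {e : V × V // e ∈ E}, ∑ j : X e.1.2, φ.bwd e j * G e.1.2 j) := by
      rw [Finset.sum_add_distrib]
      congr 1
      · exact Finset.sum_congr rfl (fun e _ => sum_sum_dite_cast e.1.1 (φ.fwd e) G)
      · exact Finset.sum_congr rfl (fun e _ => sum_sum_dite_cast e.1.2 (φ.bwd e) G)

lemma weak_duality_identity (g : GVec X E) (φ : GDual X E) (μ : GVec X E)
    (hμ : μ ∈ localPolytope X E) :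
    dotp g μ = repC g φ
      + ∑ u : V, ∑ i : X u, repUn g φ u i * μ (uIdx u i)
      + ∑ e : {e : V × V // e ∈ E}, ∑ i : X e.1.1, ∑ j : X e.1.2,
          repPw g φ e i j * μ (pIdx e i j) := by
  obtain ⟨hpos, hc, hu, hm1, hm2⟩ := hμ
  have S1 : ∑ u : V, ∑ i : X u, repUn g φ u i * μ (uIdx u i)
      = (∑ u : V, ∑ i : X u, g (uIdx u i) * μ (uIdx u i))
        + ((∑ e : {e : V × V // e ∈ E}, ∑ i : X e.1.1, φ.fwd e i * μ (uIdx e.1.1 i))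
          + (∑ e : {e : V × V // e ∈ E}, ∑ j : X e.1.2, φ.bwd e j * μ (uIdx e.1.2 j)))
        - ∑ u : V, φ.nd u := by
    simp only [repUn, sub_mul, add_mul]
    rw [Finset.sum_congr rfl (fun u _ => Finset.sum_sub_distrib _ _)]
    rw [Finset.sum_sub_distrib]
    congr 1
    · rw [Finset.sum_congr rfl (fun u _ => Finset.sum_add_distrib)]
      rw [Finset.sum_add_distrib]
      congr 1
      exact msg_sum φ (fun u i => μ (uIdx u i))
    · apply Finset.sum_congr rfl
      intro u _
      rw [← Finset.mul_sum, hu u, hc, mul_one]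
  have S2 : ∑ e : {e : V × V // e ∈ E}, ∑ i : X e.1.1, ∑ j : X e.1.2,
        repPw g φ e i j * μ (pIdx e i j)
      = (∑ e : {e : V × V // e ∈ E}, ∑ i : X e.1.1, ∑ j : X e.1.2,
          g (pIdx e i j) * μ (pIdx e i j))
        - (∑ e : {e : V × V // e ∈ E}, ∑ i : X e.1.1, φ.fwd e i * μ (uIdx e.1.1 i))
        - (∑ e : {e : V × V // e ∈ E}, ∑ j : X e.1.2, φ.bwd e j * μ (uIdx e.1.2 j)) := by
    simp only [repPw, sub_mul]
    rw [Finset.sum_congr rfl (fun e _ => Finset.sum_congr rfl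
      (fun i _ => Finset.sum_sub_distrib _ _))]
    rw [Finset.sum_congr rfl (fun e _ => Finset.sum_sub_distrib _ _)]
    rw [Finset.sum_sub_distrib]
    congr 1
    · rw [Finset.sum_congr rfl (fun e _ => Finset.sum_congr rfl
        (fun i _ => Finset.sum_sub_distrib _ _))]
      rw [Finset.sum_congr rfl (fun e _ => Finset.sum_sub_distrib _ _)]
      rw [Finset.sum_sub_distrib]
      congr 1
      apply Finset.sum_congr rfl
      intro e _
      apply Finset.sum_congr rfl
      intro i _
      rw [← Finset.mul_sum, hm1 e i]
    · apply Finset.sum_congr rfl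
      intro e _
      rw [Finset.sum_comm]
      apply Finset.sum_congr rfl
      intro j _
      rw [← Finset.mul_sum, hm2 e j]
  rw [dotp_expand, S1, S2, repC, hc, mul_one]
  ring

lemma lift_mem_localPolytope (y : ∀ v, X v) :
    lift y ∈ localPolytope X E := by
  refine ⟨?_, rfl, ?_, ?_, ?_⟩
  · rintro (⟨⟩ | ⟨⟨v, i⟩⟩ | ⟨⟨e, i, j⟩⟩) <;>
      simp only [lift] <;> positivity
  · intro u
    simp [lift, uIdx, cIdx]
  · intro e i
    by_cases h : y e.1.1 = i <;> simp [lift, uIdx, pIdx, h]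
  · intro e j
    by_cases h : y e.1.2 = j <;> simp [lift, uIdx, pIdx, h]

theorem corrected_dual_optimal_or_prunable
    [∀ v, Nonempty (X v)]
    (f : GVec X E) (y : ∀ v, X v) (Y : ∀ v, Finset (X v)) (hY : ∀ v, y v ∉ Y v)
    (gb : GVec X E) (hgb : gb = reduced f y Y)
    (φ : GDual X E)
    (hminU : ∀ u : V, (∀ i : X u, 0 ≤ repUn gb φ u i) ∧ ∃ i : X u, repUn gb φ u i = 0)
    (hminRow : ∀ (e : {e : V × V // e ∈ E}) (j : X e.1.2),
      (∀ i' : X e.1.1, 0 ≤ repPw gb φ e i' j) ∧ ∃ i' : X e.1.1, repPw gb φ e i' j = 0)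
    (hminCol : ∀ (e : {e : V × V // e ∈ E}) (i : X e.1.1),
      (∀ j' : X e.1.2, 0 ≤ repPw gb φ e i j') ∧ ∃ j' : X e.1.2, repPw gb φ e i j' = 0) :
    (repC gb φ = 0 ∧
      IsLeast ((fun μ => dotp gb μ) '' localPolytope X E) (repC gb φ) ∧
      dotp gb (lift y) = 0 ∧
      IsLeast ((fun μ => dotp gb μ) '' localPolytope X E) (dotp gb (lift y))) ∨
    ∃ u : V, ∃ i ∈ Y u, repUn gb φ u i = 0 := by
  by_cases hb : ∃ u : V, ∃ i ∈ Y u, repUn gb φ u i = 0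
  · exact Or.inr hb
  left
  -- component facts about the reduced cost vector
  have hgc : gb cIdx = 0 := by rw [hgb]; rfl
  have hgu : ∀ (v : V) (i : X v), i ∉ Y v → gb (uIdx v i) = 0 := by
    intro v i h
    rw [hgb]
    show f (uIdx v i) - f (uIdx v (if i ∈ Y v then y v else i)) = 0
    rw [if_neg h, sub_self]
  have hgp : ∀ (e : {e : V × V // e ∈ E}) (i : X e.1.1) (j : X e.1.2),
      gb (pIdx e i j) =
        (if i ∈ Y e.1.1 then
          if j ∈ Y e.1.2 then
            min (sInf ((fun i' => (f - Padj (subToOne y Y) f) (pIdx e i' j)) ''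
                  {i' : X e.1.1 | i' ∉ Y e.1.1})
               + sInf ((fun j' => (f - Padj (subToOne y Y) f) (pIdx e i j')) ''
                  {j' : X e.1.2 | j' ∉ Y e.1.2}))
              ((f - Padj (subToOne y Y) f) (pIdx e i j))
          else sInf ((fun j' => (f - Padj (subToOne y Y) f) (pIdx e i j')) ''
                  {j' : X e.1.2 | j' ∉ Y e.1.2})
        else if j ∈ Y e.1.2 then
          sInf ((fun i' => (f - Padj (subToOne y Y) f) (pIdx e i' j)) ''
                  {i' : X e.1.1 | i' ∉ Y e.1.1})
        else 0) := by
    intro e i j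
    rw [hgb]
    rfl
  have hgAB : ∀ (e : {e : V × V // e ∈ E}) (i : X e.1.1) (j : X e.1.2),
      i ∉ Y e.1.1 → j ∉ Y e.1.2 → gb (pIdx e i j) = 0 := by
    intro e i j hi hj
    rw [hgp, if_neg hi, if_neg hj]
  -- the lifted test labeling
  have hly : lift y ∈ localPolytope X E := lift_mem_localPolytope y
  have hd0 : dotp gb (lift y) = 0 := by
    rw [dotp_expand, hgc, zero_mul, zero_add]
    have hlu : ∀ (u : V) (i : X u),
        lift (E := E) y (uIdx u i) = (if y u = i then 1 else 0) := fun u i => rfl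
    have hlp : ∀ (e : {e : V × V // e ∈ E}) (i : X e.1.1) (j : X e.1.2),
        lift (E := E) y (pIdx e i j)
          = (if y e.1.1 = i ∧ y e.1.2 = j then 1 else 0) := fun e i j => rfl
    have h1 : ∀ u : V, ∑ i : X u, gb (uIdx u i) * lift (E := E) y (uIdx u i) = 0 := by
      intro u
      apply Finset.sum_eq_zero
      intro i _
      by_cases h : y u = i
      · subst h
        rw [hgu u (y u) (hY u), zero_mul]
      · rw [hlu, if_neg h, mul_zero]
    have h2 : ∀ (e : {e : V × V // e ∈ E}) (i : X e.1.1),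
        ∑ j : X e.1.2, gb (pIdx e i j) * lift (E := E) y (pIdx e i j) = 0 := by
      intro e i
      apply Finset.sum_eq_zero
      intro j _
      by_cases h : y e.1.1 = i ∧ y e.1.2 = j
      · obtain ⟨h1', h2'⟩ := h
        subst h1'; subst h2'
        rw [hgAB e _ _ (hY e.1.1) (hY e.1.2), zero_mul]
      · rw [hlp, if_neg h, mul_zero]
    rw [Finset.sum_eq_zero (fun u _ => h1 u),
      Finset.sum_eq_zero (fun e _ => Finset.sum_eq_zero (fun i _ => h2 e i)), add_zero]
  -- weak duality
  have wd : ∀ μ ∈ localPolytope X E, repC gb φ ≤ dotp gb μ := by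
    intro μ hμ
    rw [weak_duality_identity gb φ μ hμ]
    have t1 : 0 ≤ ∑ u : V, ∑ i : X u, repUn gb φ u i * μ (uIdx u i) :=
      Finset.sum_nonneg fun u _ => Finset.sum_nonneg fun i _ =>
        mul_nonneg ((hminU u).1 i) (hμ.1 _)
    have t2 : 0 ≤ ∑ e : {e : V × V // e ∈ E}, ∑ i : X e.1.1, ∑ j : X e.1.2,
        repPw gb φ e i j * μ (pIdx e i j) :=
      Finset.sum_nonneg fun e _ => Finset.sum_nonneg fun i _ => Finset.sum_nonneg fun j _ =>
        mul_nonneg ((hminCol e i).1 j) (hμ.1 _)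
    linarith
  -- choose a zero labeling avoiding the Y sets
  choose x hx using fun u => (hminU u).2
  have hxY : ∀ u : V, x u ∉ Y u := fun u hmem => hb ⟨u, x u, hmem, hx u⟩
  have hnd : ∀ u : V, φ.nd u =
      ∑ e : {e : V × V // e ∈ E},
        ((if h : e.1.1 = u then φ.fwd e (cast (congrArg X h.symm) (x u)) else 0) +
          (if h : e.1.2 = u then φ.bwd e (cast (congrArg X h.symm) (x u)) else 0)) := by
    intro u
    have hh := hx u
    rw [repUn, hgu u (x u) (hxY u), zero_add, sub_eq_zero] at hh
    exact hh.symm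
  have hsum : ∑ u : V, φ.nd u
      = ∑ e : {e : V × V // e ∈ E}, (φ.fwd e (x e.1.1) + φ.bwd e (x e.1.2)) := by
    rw [Finset.sum_congr rfl (fun u _ => hnd u), Finset.sum_comm]
    apply Finset.sum_congr rfl
    intro e _
    rw [Finset.sum_add_distrib, sum_dite_cast_fun e.1.1 (φ.fwd e) x,
      sum_dite_cast_fun e.1.2 (φ.bwd e) x]
  have hedge : ∀ e : {e : V × V // e ∈ E}, 0 ≤ φ.fwd e (x e.1.1) + φ.bwd e (x e.1.2) := by
    intro e
    refine edge_key (Y e.1.1) (Y e.1.2) (fun i j => gb (pIdx e i j)) (φ.fwd e) (φ.bwd e)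
      (fun i => sInf ((fun j' => (f - Padj (subToOne y Y) f) (pIdx e i j')) ''
        {j' : X e.1.2 | j' ∉ Y e.1.2}))
      (fun j => sInf ((fun i' => (f - Padj (subToOne y Y) f) (pIdx e i' j)) ''
        {i' : X e.1.1 | i' ∉ Y e.1.1}))
      ?_ ?_ ?_ ?_ ?_ ?_ ?_ (x e.1.1) (x e.1.2) (hxY e.1.1) (hxY e.1.2)
    · exact fun i j hi hj => hgAB e i j hi hj
    · intro i j hi hj
      rw [hgp, if_pos hi, if_neg hj]
    · intro i j hi hj
      rw [hgp, if_neg hi, if_pos hj]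
    · intro i j hi hj
      rw [hgp, if_pos hi, if_pos hj]
      exact (min_le_left _ _).trans (le_of_eq (add_comm _ _))
    · exact fun i j => (hminRow e j).1 i
    · exact fun j => (hminRow e j).2
    · exact fun i => (hminCol e i).2
  have hge : 0 ≤ repC gb φ := by
    rw [repC, hgc, zero_add, hsum]
    exact Finset.sum_nonneg fun e _ => hedge e
  have hle : repC gb φ ≤ 0 := hd0 ▸ wd _ hly
  have h0 : repC gb φ = 0 := le_antisymm hle hge
  refine ⟨h0, ⟨⟨lift y, hly, hd0.trans h0.symm⟩, ?_⟩, hd0, ⟨⟨lift y, hly, rfl⟩, ?_⟩⟩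
  · rintro r ⟨μ, hμ, rfl⟩
    exact wd μ hμ
  · rintro r ⟨μ, hμ, rfl⟩
    rw [hd0, ← h0]
    exact wd μ hμ

end
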